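/- Let G be a partial cube (a graph isometrically embeddable into a hypercube) with Θ-classes E_1,…,E_q defining complementary halfspaces H'_i, H''_i, and let w be a weight function on vertices. Then the weighted Wiener index satisfies W_w(G) = Σ_{u,v∈V} w(u)w(v)d(u,v) = 2·Σ_{i=1}^q w(H'_i)·w(H''_i) (equivalently, summing each unordered pair once, W_w(G) = Σ_i w(H'_i)·w(H''_i)). -/

import Mathlib

def Wset {V : Type*} (G : SimpleGraph V) (u v : V) : Set V :=
  {x | G.dist u x < G.dist v x}

/-- `G` is a partial cube: connected and isometrically embeddable into a hypercube
(graph distance equals Hamming distance of the images). -/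
def IsPartialCube {V : Type*} (G : SimpleGraph V) : Prop :=
  G.Connected ∧ ∃ (n : ℕ) (f : V → (Fin n → Bool)),
    ∀ u v : V, G.dist u v = hammingDist (f u) (f v)

open Finset in
/-- Weighted Wiener index of a partial cube: the (ordered) double sum
`Σ_{u,v} w(u)w(v)d(u,v)` equals the sum of `w(H')·w(H'')` over all ordered pairs of
complementary halfspaces `(W(u,v), W(v,u))`, i.e. twice the sum over `Θ`-classes. -/
theorem wiener_index_partial_cube {V : Type*} [Fintype V] (G : SimpleGraph V)
    (hpc : IsPartialCube G) (w : V → ℝ) (hw : ∀ v, 0 ≤ w v) :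
    (∑ u : V, ∑ v : V, w u * w v * (G.dist u v : ℝ)) =
      ∑ᶠ p ∈ {p : Set V × Set V | ∃ u v : V, G.Adj u v ∧
          p.1 = Wset G u v ∧ p.2 = Wset G v u},
        (∑ᶠ x ∈ p.1, w x) * (∑ᶠ x ∈ p.2, w x) := by
  classical
  obtain ⟨hconn, n, f, hf⟩ := hpc
  have bool_ne : ∀ a b : Bool, a ≠ b → a = !b := by decide
  -- half-spaces as finsets
  set A : Fin n → Bool → Finset V := fun i b => Finset.univ.filter (fun x => f x i = b)
    with hA
  have hAmem : ∀ i b x, x ∈ A i b ↔ f x i = b := by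
    intro i b x; simp [hA]
  -- the key computation of `Wset` for an edge flipping exactly coordinate `i`
  have hW : ∀ u v : V, ∀ i : Fin n, f u i ≠ f v i → (∀ j, j ≠ i → f u j = f v j) →
      Wset G u v = ↑(A i (f u i)) := by
    intro u v i hne hoth
    ext x
    simp only [Wset, Set.mem_setOf_eq, Finset.coe_filter, hAmem, Finset.mem_coe]
    rw [hf, hf]
    show (Finset.univ.filter fun j => f u j ≠ f x j).card <
        (Finset.univ.filter fun j => f v j ≠ f x j).card ↔ _
    rw [Finset.card_filter, Finset.card_filter,
      ← Finset.add_sum_erase _ _ (Finset.mem_univ i),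
      ← Finset.add_sum_erase _ _ (Finset.mem_univ i)]
    have hrest : ∑ j ∈ Finset.univ.erase i, (if f u j ≠ f x j then 1 else 0)
        = ∑ j ∈ Finset.univ.erase i, (if f v j ≠ f x j then 1 else 0) := by
      refine Finset.sum_congr rfl fun j hj => ?_
      rw [hoth j (Finset.ne_of_mem_erase hj)]
    rw [hrest]
    rcases Bool.eq_false_or_eq_true (f u i) with hb | hb <;>
      rcases Bool.eq_false_or_eq_true (f v i) with hc | hc <;>
        rcases Bool.eq_false_or_eq_true (f x i) with hd | hd <;>
          simp_all
  -- every edge flips exactly one coordinate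
  have hedge : ∀ u v : V, G.Adj u v → ∃ i : Fin n,
      f u i ≠ f v i ∧ (∀ j, j ≠ i → f u j = f v j) := by
    intro u v huv
    have h1 : (Finset.univ.filter fun j => f u j ≠ f v j).card = 1 := by
      have h := (hf u v).symm
      rw [SimpleGraph.dist_eq_one_iff_adj.mpr huv] at h
      exact h
    obtain ⟨i, hi⟩ := Finset.card_eq_one.mp h1
    refine ⟨i, ?_, ?_⟩
    · have : i ∈ Finset.univ.filter fun j => f u j ≠ f v j := by
        rw [hi]; exact Finset.mem_singleton_self i
      exact (Finset.mem_filter.mp this).2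
    · intro j hj
      by_contra hne
      have : j ∈ Finset.univ.filter fun j => f u j ≠ f v j :=
        Finset.mem_filter.mpr ⟨Finset.mem_univ j, hne⟩
      rw [hi, Finset.mem_singleton] at this
      exact hj this
  set used : Finset (Fin n) :=
    Finset.univ.filter (fun i => ∃ u v : V, G.Adj u v ∧ f u i ≠ f v i) with hused
  have hused_mem : ∀ i, i ∈ used ↔ ∃ u v : V, G.Adj u v ∧ f u i ≠ f v i := by
    intro i; simp [hused]
  -- unused coordinates are constant on connected G
  have hconst : ∀ i, i ∉ used → ∀ x y : V, f x i = f y i := by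
    intro i hi x y
    have hwalk : ∀ (a b : V) (p : G.Walk a b), f a i = f b i := by
      intro a b p
      induction p with
      | nil => rfl
      | cons h p ih =>
        refine Eq.trans ?_ ih
        by_contra hne
        exact hi ((hused_mem i).mpr ⟨_, _, h, hne⟩)
    exact (hconn x y).elim fun p => hwalk x y p
  have hzero : ∀ i, i ∉ used →
      (∑ x ∈ A i true, w x) * (∑ x ∈ A i false, w x) = 0 := by
    intro i hi
    by_cases h : A i true = ∅
    · rw [h, Finset.sum_empty, zero_mul]
    · obtain ⟨x₀, hx₀⟩ := Finset.nonempty_iff_ne_empty.mpr h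
      have hx₀' : f x₀ i = true := (hAmem i true x₀).mp hx₀
      have : A i false = ∅ := by
        rw [Finset.eq_empty_iff_forall_notMem]
        intro y hy
        have := (hAmem i false y).mp hy
        rw [hconst i hi y x₀, hx₀'] at this
        exact absurd this (by simp)
      rw [this, Finset.sum_empty, mul_zero]
  -- per-coordinate decomposition of the double sum
  have hcoord : ∀ i : Fin n,
      (∑ u : V, ∑ v : V, if f u i ≠ f v i then w u * w v else 0)
        = (∑ x ∈ A i true, w x) * (∑ x ∈ A i false, w x)
          + (∑ x ∈ A i false, w x) * (∑ x ∈ A i true, w x) := by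
    intro i
    rw [Finset.sum_mul_sum, Finset.sum_mul_sum]
    rw [← Finset.sum_filter_add_sum_filter_not Finset.univ (fun u => f u i = true)]
    have ht : ∀ u ∈ Finset.univ.filter (fun u => f u i = true),
        (∑ v : V, if f u i ≠ f v i then w u * w v else 0)
          = ∑ v ∈ A i false, w u * w v := by
      intro u hu
      have hu' : f u i = true := (Finset.mem_filter.mp hu).2
      rw [Finset.sum_filter]
      refine Finset.sum_congr rfl fun v _ => ?_
      rw [hu']
      rcases Bool.eq_false_or_eq_true (f v i) with h | h <;> simp [h]
    have hft : ∀ u ∈ Finset.univ.filter (fun u => ¬ f u i = true),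
        (∑ v : V, if f u i ≠ f v i then w u * w v else 0)
          = ∑ v ∈ A i true, w u * w v := by
      intro u hu
      have hu' : f u i = false := by
        have := (Finset.mem_filter.mp hu).2; simpa using this
      rw [Finset.sum_filter]
      refine Finset.sum_congr rfl fun v _ => ?_
      rw [hu']
      rcases Bool.eq_false_or_eq_true (f v i) with h | h <;> simp [h]
    rw [Finset.sum_congr rfl ht, Finset.sum_congr rfl hft]
    have e1 : Finset.univ.filter (fun u : V => f u i = true) = A i true := rfl
    have e2 : Finset.univ.filter (fun u : V => ¬ f u i = true) = A i false := by
      apply Finset.filter_congr; intro x _; simp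
    rw [e1, e2]
  -- uniqueness of the flipped coordinate
  have huniq : ∀ u v : V, G.Adj u v → ∀ i, f u i ≠ f v i →
      ∀ j, j ≠ i → f u j = f v j := by
    intro u v huv i hne j hj
    obtain ⟨i₀, hne₀, hoth₀⟩ := hedge u v huv
    have hii : i = i₀ := by
      by_contra h; exact hne (hoth₀ i h)
    exact hoth₀ j (by rw [← hii]; exact hj)
  -- the finset of pairs of complementary halfspaces
  set T : Finset (Set V × Set V) :=
    (used ×ˢ (Finset.univ : Finset Bool)).image
      (fun ib => ((↑(A ib.1 ib.2) : Set V), (↑(A ib.1 (!ib.2)) : Set V))) with hT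
  have hPT : {p : Set V × Set V | ∃ u v : V, G.Adj u v ∧
      p.1 = Wset G u v ∧ p.2 = Wset G v u} = ↑T := by
    ext p
    simp only [Set.mem_setOf_eq, hT, Finset.coe_image, Set.mem_image, Finset.mem_coe,
      Finset.mem_product, Finset.mem_univ, and_true]
    constructor
    · rintro ⟨u, v, huv, h1, h2⟩
      obtain ⟨i, hne, hoth⟩ := hedge u v huv
      refine ⟨(i, f u i), (hused_mem i).mpr ⟨u, v, huv, hne⟩, ?_⟩
      have hv : f v i = !(f u i) := bool_ne _ _ (Ne.symm hne)
      have e1 : Wset G u v = ↑(A i (f u i)) := hW u v i hne hoth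
      have e2 : Wset G v u = ↑(A i (f v i)) :=
        hW v u i (Ne.symm hne) (fun j hj => (hoth j hj).symm)
      rw [← h1] at e1
      rw [← h2, hv] at e2
      exact Prod.ext e1.symm e2.symm
    · rintro ⟨⟨i, b⟩, hmem, rfl⟩
      obtain ⟨u, v, huv, hne⟩ := (hused_mem i).mp hmem
      have hoth := huniq u v huv i hne
      by_cases hb : f u i = b
      · refine ⟨u, v, huv, ?_, ?_⟩
        · rw [hW u v i hne hoth, hb]
        · have hv : f v i = !b := by rw [← hb]; exact bool_ne _ _ (Ne.symm hne)
          rw [hW v u i (Ne.symm hne) (fun j hj => (hoth j hj).symm), hv]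
      · have hu : f u i = !b := bool_ne _ _ hb
        have hv : f v i = b := by
          have := bool_ne _ _ (Ne.symm hne)
          rw [this, hu, Bool.not_not]
        refine ⟨v, u, huv.symm, ?_, ?_⟩
        · rw [hW v u i (Ne.symm hne) (fun j hj => (hoth j hj).symm), hv]
        · rw [hW u v i hne hoth, hu]
  -- injectivity of the parametrization
  have hinj : ∀ ib ∈ used ×ˢ (Finset.univ : Finset Bool),
      ∀ jc ∈ used ×ˢ (Finset.univ : Finset Bool),
      ((↑(A ib.1 ib.2) : Set V), (↑(A ib.1 (!ib.2)) : Set V))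
        = ((↑(A jc.1 jc.2) : Set V), (↑(A jc.1 (!jc.2)) : Set V)) → ib = jc := by
    rintro ⟨i, b⟩ hib ⟨j, c⟩ _ heq
    have hA1 : A i b = A j c := Finset.coe_inj.mp (congrArg Prod.fst heq)
    have hA2 : A i (!b) = A j (!c) := Finset.coe_inj.mp (congrArg Prod.snd heq)
    have hi : i ∈ used := (Finset.mem_product.mp hib).1
    obtain ⟨u, v, huv, hne⟩ := (hused_mem i).mp hi
    have hoth := huniq u v huv i hne
    have key : ∀ a c' : V, (∀ j', j' ≠ i → f a j' = f c' j') →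
        f a i = b → f c' i = !b → (i, b) = ((j, c) : Fin n × Bool) := by
      intro a c' hoth' ha hc'
      have ha1 : a ∈ A i b := (hAmem i b a).mpr ha
      have hc1 : c' ∈ A i (!b) := (hAmem i (!b) c').mpr hc'
      rw [hA1] at ha1; rw [hA2] at hc1
      have ha2 : f a j = c := (hAmem j c a).mp ha1
      have hc2 : f c' j = !c := (hAmem j (!c) c').mp hc1
      have hji : j = i := by
        by_contra hji
        have := hoth' j hji
        rw [ha2, hc2] at this
        simp at this
      subst hji
      have : b = c := by rw [← ha, ha2]
      rw [this]
    by_cases hb : f u i = b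
    · exact key u v hoth hb (by rw [← hb]; exact bool_ne _ _ (Ne.symm hne))
    · have hu : f u i = !b := bool_ne _ _ hb
      have hv : f v i = b := by
        have := bool_ne _ _ (Ne.symm hne)
        rw [this, hu, Bool.not_not]
      exact key v u (fun j' hj' => (hoth j' hj').symm) hv hu
  -- distances as sums of indicators
  have hdist : ∀ u v : V, (G.dist u v : ℝ)
      = ∑ i : Fin n, (if f u i ≠ f v i then (1 : ℝ) else 0) := by
    intro u v
    rw [hf]
    show (((Finset.univ.filter fun j => f u j ≠ f v j).card : ℕ) : ℝ) = _
    rw [Finset.card_filter]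
    push_cast
    rfl
  -- put everything together
  calc (∑ u : V, ∑ v : V, w u * w v * (G.dist u v : ℝ))
      = ∑ u : V, ∑ v : V, ∑ i : Fin n,
          (if f u i ≠ f v i then w u * w v else 0) := by
        refine Finset.sum_congr rfl fun u _ => Finset.sum_congr rfl fun v _ => ?_
        rw [hdist, Finset.mul_sum]
        exact Finset.sum_congr rfl fun i _ => by rw [mul_ite, mul_one, mul_zero]
    _ = ∑ u : V, ∑ i : Fin n, ∑ v : V,
          (if f u i ≠ f v i then w u * w v else 0) :=
        Finset.sum_congr rfl fun u _ => Finset.sum_comm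
    _ = ∑ i : Fin n, ∑ u : V, ∑ v : V,
          (if f u i ≠ f v i then w u * w v else 0) := Finset.sum_comm
    _ = ∑ i : Fin n, ((∑ x ∈ A i true, w x) * (∑ x ∈ A i false, w x)
          + (∑ x ∈ A i false, w x) * (∑ x ∈ A i true, w x)) :=
        Finset.sum_congr rfl fun i _ => hcoord i
    _ = ∑ i ∈ used, ((∑ x ∈ A i true, w x) * (∑ x ∈ A i false, w x)
          + (∑ x ∈ A i false, w x) * (∑ x ∈ A i true, w x)) := by
        refine (Finset.sum_subset (Finset.subset_univ used) ?_).symm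
        intro i _ hi
        rw [hzero i hi, mul_comm, hzero i hi, add_zero]
    _ = ∑ ib ∈ used ×ˢ (Finset.univ : Finset Bool),
          (∑ x ∈ A ib.1 ib.2, w x) * (∑ x ∈ A ib.1 (!ib.2), w x) := by
        rw [Finset.sum_product]
        refine Finset.sum_congr rfl fun i _ => ?_
        rw [Fintype.sum_bool]
        simp [add_comm]
    _ = ∑ p ∈ T, (∑ᶠ x ∈ p.1, w x) * (∑ᶠ x ∈ p.2, w x) := by
        rw [hT, Finset.sum_image hinj]
        refine Finset.sum_congr rfl fun ib _ => ?_
        rw [finsum_mem_coe_finset, finsum_mem_coe_finset]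
    _ = ∑ᶠ p ∈ {p : Set V × Set V | ∃ u v : V, G.Adj u v ∧
          p.1 = Wset G u v ∧ p.2 = Wset G v u},
          (∑ᶠ x ∈ p.1, w x) * (∑ᶠ x ∈ p.2, w x) := by
        rw [hPT, finsum_mem_coe_finset]
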